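/- Let A be an n×n real matrix, let Q be an n×n positive semidefinite matrix, and define h(X) := A X Aᵀ + Q on n×n symmetric matrices. Let P be a positive semidefinite matrix satisfying P ⪯ h(P) in the Loewner order. Let X = Σ_{j∈F} κ_j h^{j}(P) be a finite convex combination of iterates of h applied to P (κ_j ≥ 0, Σ_{j∈F} κ_j = 1), and let α ≥ 0. Define t(X,α) := (1/(1+α)) P + (α/(1+α)) h(X). Then P ⪯ t(X,α) ⪯ h(X); in particular Tr(P) ≤ Tr(t(X,α)) ≤ Tr(h(X)). -/

import Mathlib

open Matrix

/-- The Lyapunov-type operator `h(X) = A X Aᵀ + Q` on `n × n` matrices. -/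
def hOp {n : ℕ} (A Q X : Matrix (Fin n) (Fin n) ℝ) : Matrix (Fin n) (Fin n) ℝ :=
  A * X * Aᵀ + Q

lemma psd_smul {n : ℕ} {M : Matrix (Fin n) (Fin n) ℝ} (h : M.PosSemidef) {c : ℝ}
    (hc : 0 ≤ c) : (c • M).PosSemidef := by
  refine ⟨?_, fun x => ?_⟩
  · unfold Matrix.IsHermitian
    rw [conjTranspose_smul, h.1.eq]
    simp
  · exact (h.smul hc).2 x

lemma psd_trace_nonneg {n : ℕ} {M : Matrix (Fin n) (Fin n) ℝ} (h : M.PosSemidef) :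
    0 ≤ M.trace := by
  have hd : ∀ i, 0 ≤ M i i := by
    intro i
    exact h.diag_nonneg
  exact Finset.sum_nonneg fun i _ => hd i

lemma psd_sum {n : ℕ} (F : Finset ℕ) (f : ℕ → Matrix (Fin n) (Fin n) ℝ)
    (h : ∀ j ∈ F, (f j).PosSemidef) : (∑ j ∈ F, f j).PosSemidef := by
  classical
  induction F using Finset.induction with
  | empty => simpa using Matrix.PosSemidef.zero
  | insert _ _ hx ih =>
      rw [Finset.sum_insert hx]
      exact (h _ (Finset.mem_insert_self _ _)).add
        (ih fun j hj => h j (Finset.mem_insert_of_mem hj))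

lemma hOp_mono {n : ℕ} (A Q : Matrix (Fin n) (Fin n) ℝ)
    {Y Z : Matrix (Fin n) (Fin n) ℝ} (h : (Z - Y).PosSemidef) :
    (hOp A Q Z - hOp A Q Y).PosSemidef := by
  have : hOp A Q Z - hOp A Q Y = A * (Z - Y) * Aᴴ := by
    simp [hOp, Matrix.mul_sub, Matrix.sub_mul]
  rw [this]
  exact h.mul_mul_conjTranspose_same A

theorem event_update_sandwich {n : ℕ} (A Q P : Matrix (Fin n) (Fin n) ℝ)
    (hQ : Q.PosSemidef) (hP : P.PosSemidef)
    (hPh : (hOp A Q P - P).PosSemidef)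
    (F : Finset ℕ) (κ : ℕ → ℝ) (hκ : ∀ j ∈ F, 0 ≤ κ j) (hsum : ∑ j ∈ F, κ j = 1)
    (X : Matrix (Fin n) (Fin n) ℝ) (hX : X = ∑ j ∈ F, κ j • (hOp A Q)^[j] P)
    (α : ℝ) (hα : 0 ≤ α) :
    ((1 / (1 + α)) • P + (α / (1 + α)) • hOp A Q X - P).PosSemidef ∧
    (hOp A Q X - ((1 / (1 + α)) • P + (α / (1 + α)) • hOp A Q X)).PosSemidef ∧
    P.trace ≤ ((1 / (1 + α)) • P + (α / (1 + α)) • hOp A Q X).trace ∧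
    ((1 / (1 + α)) • P + (α / (1 + α)) • hOp A Q X).trace ≤ (hOp A Q X).trace := by
  have hiter : ∀ j : ℕ, ((hOp A Q)^[j] P - P).PosSemidef := by
    intro j
    induction j with
    | zero => simpa using Matrix.PosSemidef.zero
    | succ k ih =>
        have h1 : (hOp A Q ((hOp A Q)^[k] P) - hOp A Q P).PosSemidef := hOp_mono A Q ih
        have := h1.add hPh
        rw [Function.iterate_succ_apply']
        simpa using this
  -- h(X) = ∑ κ_j h^[j+1] P
  have hEq : hOp A Q X = ∑ j ∈ F, κ j • (hOp A Q)^[j+1] P := by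
    simp only [Function.iterate_succ_apply', hOp, hX, Matrix.sum_mul, Matrix.mul_sum,
      Matrix.mul_smul, Matrix.smul_mul, smul_add, Finset.sum_add_distrib,
      ← Finset.sum_smul, hsum, one_smul]
  have hHX : hOp A Q X - P = ∑ j ∈ F, κ j • ((hOp A Q)^[j+1] P - P) := by
    have h2 : ∑ j ∈ F, κ j • ((hOp A Q)^[j+1] P - P)
        = (∑ j ∈ F, κ j • (hOp A Q)^[j+1] P) - (∑ j ∈ F, κ j) • P := by
      rw [Finset.sum_smul, ← Finset.sum_sub_distrib]
      exact Finset.sum_congr rfl fun j _ => smul_sub _ _ _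
    rw [h2, hsum, one_smul, ← hEq]
  have hD : (hOp A Q X - P).PosSemidef := by
    rw [hHX]
    exact psd_sum _ _ fun j hj => psd_smul (hiter (j+1)) (hκ j hj)
  have h1α : (0:ℝ) < 1 + α := by linarith
  have hcd : (1:ℝ) / (1 + α) + α / (1 + α) = 1 := by field_simp
  have e1 : (1 / (1 + α)) • P + (α / (1 + α)) • hOp A Q X - P
      = (α / (1 + α)) • (hOp A Q X - P) := by
    calc (1 / (1 + α)) • P + (α / (1 + α)) • hOp A Q X - P
        = (1 / (1 + α)) • P + (α / (1 + α)) • hOp A Q X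
          - ((1 / (1 + α)) + α / (1 + α)) • P := by rw [hcd, one_smul]
      _ = (α / (1 + α)) • (hOp A Q X - P) := by rw [add_smul, smul_sub]; abel
  have e2 : hOp A Q X - ((1 / (1 + α)) • P + (α / (1 + α)) • hOp A Q X)
      = (1 / (1 + α)) • (hOp A Q X - P) := by
    calc hOp A Q X - ((1 / (1 + α)) • P + (α / (1 + α)) • hOp A Q X)
        = ((1 / (1 + α)) + α / (1 + α)) • hOp A Q X
          - ((1 / (1 + α)) • P + (α / (1 + α)) • hOp A Q X) := by rw [hcd, one_smul]
      _ = (1 / (1 + α)) • (hOp A Q X - P) := by rw [add_smul, smul_sub]; abel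
  have p1 : ((1 / (1 + α)) • P + (α / (1 + α)) • hOp A Q X - P).PosSemidef := by
    rw [e1]; exact psd_smul hD (by positivity)
  have p2 : (hOp A Q X - ((1 / (1 + α)) • P + (α / (1 + α)) • hOp A Q X)).PosSemidef := by
    rw [e2]; exact psd_smul hD (by positivity)
  refine ⟨p1, p2, ?_, ?_⟩
  · have := psd_trace_nonneg p1
    rw [Matrix.trace_sub] at this
    linarith
  · have := psd_trace_nonneg p2
    rw [Matrix.trace_sub] at this
    linarith
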